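/- Let f = (f_V, {f_{l,v}}) : Γ → Γ' be a morphism of moment graphs on Λ and ξ = {ξ_v} a Γ-monodromy such that whenever v—w is an edge of Γ with f_V(v) ≠ f_V(w), one has ξ_v(l'(f_E(v—w))) ∈ l(v—w)·ℤ, so that the twisted pull-backs f^{ξ*} : Z_m(Γ') → Z_m(Γ) and f^{ξ*} : Z_a^{≤i}(Γ')_ℚ → Z_a^{≤i}(Γ)_ℚ, both given by (z_{v'})_{v'} ↦ (ξ_v(z_{f_V(v)}))_v, are defined. Then the localized Chern character respects pull-backs: f^{ξ*} ∘ cch'_i = cch_i ∘ f^{ξ*}, where cch'_i and cch_i are the localized Chern characters of Γ' and Γ respectively. -/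

import Mathlib

noncomputable section

/-- A moment graph on a lattice `Λ`: a poset of vertices (the order given as a
relation with axioms), a set of directed edges `E ⊆ V × V`, and a label function
assigning to each edge a nonzero element of `Λ`, such that edges respect the
order and are not loops. -/
structure MomentGraph (Λ : Type*) [AddCommGroup Λ] (V : Type*) where
  le : V → V → Prop
  le_refl : ∀ v, le v v
  le_trans : ∀ u v w, le u v → le v w → le u w
  le_antisymm : ∀ v w, le v w → le w v → v = w
  E : V → V → Prop
  label : V → V → Λ
  label_ne_zero : ∀ {v w}, E v w → label v w ≠ 0
  le_of_E : ∀ {v w}, E v w → le v w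
  ne_of_E : ∀ {v w}, E v w → v ≠ w

namespace MomentGraph

variable {Λ : Type*} [AddCommGroup Λ] {V V' : Type*}

/-- Underlying (unoriented) adjacency `v — w`. -/
def Adj (G : MomentGraph Λ V) (v w : V) : Prop := G.E v w ∨ G.E w v

open Classical in
/-- The label of the unoriented edge `v — w` (there are no multiple edges, so this
is well defined on adjacent pairs). -/
def albl (G : MomentGraph Λ V) (v w : V) : Λ := if G.E v w then G.label v w else G.label w v

/-- A morphism of moment graphs on the same lattice `Λ` (Definition 2.3):
a poset morphism on vertices sending edges to edges or collapsing them (MR1),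
together with a `ℤ`-linear automorphism of `Λ` for every vertex satisfying
(MR2)(a) and (MR2)(b). -/
structure Hom (G : MomentGraph Λ V) (G' : MomentGraph Λ V') where
  toFun : V → V'
  mono : ∀ {v w}, G.le v w → G'.le (toFun v) (toFun w)
  adj : ∀ {v w}, G.Adj v w → G'.Adj (toFun v) (toFun w) ∨ toFun v = toFun w
  aut : V → (Λ ≃ₗ[ℤ] Λ)
  label_pm : ∀ {v w}, G.Adj v w → toFun v ≠ toFun w →
      aut v (G.albl v w) = G'.albl (toFun v) (toFun w) ∨
      aut v (G.albl v w) = - G'.albl (toFun v) (toFun w)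
  compat : ∀ {v w}, G.Adj v w → toFun v ≠ toFun w → ∀ μ : Λ,
      ∃ n : ℤ, aut v μ - aut w μ = n • G'.albl (toFun v) (toFun w)

/-- A morphism of moment graphs is an isomorphism if it has a two-sided inverse
morphism, inverting both the vertex map and the label automorphisms. -/
def Hom.IsIso {G : MomentGraph Λ V} {G' : MomentGraph Λ V'} (f : G.Hom G') : Prop :=
  ∃ g : G'.Hom G, (∀ v, g.toFun (f.toFun v) = v) ∧ (∀ v', f.toFun (g.toFun v') = v') ∧
    ∀ v (μ : Λ), g.aut (f.toFun v) (f.aut v μ) = μ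

/-- A `Γ`-monodromy: a collection of lattice automorphisms `ξ_v` with
`ξ_v(λ) - ξ_w(λ) ∈ l(v → w)·ℤ` for all edges `v → w`. -/
def Monodromy (G : MomentGraph Λ V) (ξ : V → (Λ ≃ₗ[ℤ] Λ)) : Prop :=
  ∀ {v w}, G.E v w → ∀ μ : Λ, ∃ n : ℤ, ξ v μ - ξ w μ = n • G.label v w

/-- A `Γ`-compatible equivalence relation (EQV1) and (EQV2). -/
def Compatible (G : MomentGraph Λ V) (s : Setoid V) : Prop :=
  (∀ ⦃v w u⦄, s.r v w → G.le v u → G.le u w → s.r v u) ∧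
  (∀ ⦃v₁ w₁⦄, G.E v₁ w₁ → ¬ s.r v₁ w₁ → ∀ v₂, s.r v₂ v₁ →
    (∃! w₂, s.r w₂ w₁ ∧ G.E v₂ w₂) ∧
    (∀ w₂, s.r w₂ w₁ → G.E v₂ w₂ → G.label v₂ w₂ = G.label v₁ w₁))

/-- Edges of the quotient graph: `[v] → [w]` iff `v ≁ w` and there are
representatives joined by an edge. -/
def QE (G : MomentGraph Λ V) (s : Setoid V) (a b : Quotient s) : Prop :=
  a ≠ b ∧ ∃ v w, Quotient.mk s v = a ∧ Quotient.mk s w = b ∧ G.E v w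

open Classical in
/-- The label of a quotient edge, via a choice of representatives. -/
def Qlabel (G : MomentGraph Λ V) (s : Setoid V) (a b : Quotient s) : Λ :=
  if h : ∃ v, ∃ w, Quotient.mk s v = a ∧ Quotient.mk s w = b ∧ G.E v w
  then G.label h.choose h.choose_spec.choose else 0

/-- The covering relation of the vertex poset. -/
def cov (G : MomentGraph Λ V) (v w : V) : Prop :=
  G.le v w ∧ v ≠ w ∧ ∀ u, G.le v u → G.le u w → u = v ∨ u = w

/-- A special matching of the vertex poset (Definition of Brenti): a bijection `M`
such that `M(v)` covers or is covered by `v`, and if `M(v) ≠ w` and `v ⋖ w`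
then `M(v) ≤ M(w)`. -/
def SpecialMatching (G : MomentGraph Λ V) (M : V → V) : Prop :=
  Function.Bijective M ∧ (∀ v, G.cov (M v) v ∨ G.cov v (M v)) ∧
  (∀ v w, M v ≠ w → G.cov v w → G.le (M v) (M w))

end MomentGraph

noncomputable section StructureAlgebras

/-- The generic "structure algebra" construction: given an edge relation `E` on `V`
and an `A`-valued function `lab` (the image of the label of each edge in `A`),
this is the subalgebra of `∏_{v ∈ V} A` of tuples `(z_v)` with
`z_v - z_w ∈ lab v w · A` for every edge `v → w`, with coordinate-wise operations
and with `A` acting diagonally. -/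
def structAlg {V : Type*} {A : Type*} [CommRing A] (E : V → V → Prop) (lab : V → V → A) :
    Subalgebra A (V → A) where
  carrier := {z | ∀ ⦃v w⦄, E v w → ∃ t, z v - z w = lab v w * t}
  mul_mem' := by
    intro a b ha hb v w h
    obtain ⟨t, ht⟩ := ha h
    obtain ⟨t', ht'⟩ := hb h
    refine ⟨a v * t' + t * b w, ?_⟩
    simp only [Pi.mul_apply]
    linear_combination a v * ht' + b w * ht
  one_mem' := by intro v w h; exact ⟨0, by simp⟩
  add_mem' := by
    intro a b ha hb v w h
    obtain ⟨t, ht⟩ := ha h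
    obtain ⟨t', ht'⟩ := hb h
    refine ⟨t + t', ?_⟩
    simp only [Pi.add_apply]
    linear_combination ht + ht'
  zero_mem' := by intro v w h; exact ⟨0, by simp⟩
  algebraMap_mem' := by
    intro r v w h
    exact ⟨0, by simp⟩

set_option synthInstance.maxHeartbeats 4000000 in
instance structAlgAddCommGroup {V A : Type*} [CommRing A] (E : V → V → Prop)
    (lab : V → V → A) : AddCommGroup (structAlg E lab) :=
  inferInstance

set_option synthInstance.maxHeartbeats 4000000 in
instance structAlgModule {V A : Type*} [CommRing A] (E : V → V → Prop)
    (lab : V → V → A) : Module A (structAlg E lab) :=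
  inferInstance

/-- The group ring `ℤ[Λ]`. -/
abbrev GrpRing (Λ : Type*) [AddCommGroup Λ] := AddMonoidAlgebra ℤ Λ

variable {Λ : Type*} [AddCommGroup Λ]

/-- The basis element `e^μ` of the group ring `ℤ[Λ]`. -/
def grExp (μ : Λ) : GrpRing Λ := AddMonoidAlgebra.single μ 1

/-- The element `x_μ = 1 - e^{-μ}` of the group ring `ℤ[Λ]`. -/
def grX (μ : Λ) : GrpRing Λ := 1 - grExp (-μ)

/-- The augmentation `ℤ[Λ] → ℤ`, `e^λ ↦ 1`. -/
def grAug (Λ : Type*) [AddCommGroup Λ] : GrpRing Λ →+* ℤ :=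
  ((AddMonoidAlgebra.lift ℤ ℤ Λ) 1).toRingHom

/-- The augmentation ideal `I_m ⊂ ℤ[Λ]`. -/
def Im (Λ : Type*) [AddCommGroup Λ] : Ideal (GrpRing Λ) := RingHom.ker (grAug Λ)

/-- The multiplicative structure algebra of edge data `(E, lab)`:
tuples `(z_v)` of elements of `ℤ[Λ]` with `z_v - z_w ∈ x_{lab v w}·ℤ[Λ]`
for all edges. -/
abbrev ZmOf {V : Type*} (E : V → V → Prop) (lab : V → V → Λ) :
    Subalgebra (GrpRing Λ) (V → GrpRing Λ) :=
  structAlg E fun v w => grX (lab v w)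

/-- The multiplicative structure algebra `Z_m(Γ)` of a moment graph. -/
abbrev MomentGraph.Zm {V : Type*} (G : MomentGraph Λ V) :
    Subalgebra (GrpRing Λ) (V → GrpRing Λ) :=
  ZmOf G.E G.label

/-- Index type of a chosen basis of the lattice `Λ`. -/
abbrev bIdx (Λ : Type*) [AddCommGroup Λ] [Module.Free ℤ Λ] [Module.Finite ℤ Λ] :=
  Module.Free.ChooseBasisIndex ℤ Λ

/-- A model of the symmetric algebra `S^*(Λ)` over `ℤ`: the polynomial ring on a
basis of `Λ`. -/
abbrev SymZ (Λ : Type*) [AddCommGroup Λ] [Module.Free ℤ Λ] [Module.Finite ℤ Λ] :=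
  MvPolynomial (bIdx Λ) ℤ

variable [Module.Free ℤ Λ] [Module.Finite ℤ Λ]

/-- The canonical embedding `Λ → S^*(Λ)` (degree-one part). -/
def iotaZ (Λ : Type*) [AddCommGroup Λ] [Module.Free ℤ Λ] [Module.Finite ℤ Λ] :
    Λ →ₗ[ℤ] SymZ Λ :=
  (Finsupp.linearCombination ℤ fun i => (MvPolynomial.X i : SymZ Λ)).comp
    (Module.Free.chooseBasis ℤ Λ).repr.toLinearMap

/-- The additive structure algebra of edge data `(E, lab)`:
tuples `(z_v)` of elements of `S^*(Λ)` with `z_v - z_w ∈ l(v→w)·S^*(Λ)`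
for all edges. -/
abbrev ZaOf {V : Type*} (E : V → V → Prop) (lab : V → V → Λ) :
    Subalgebra (SymZ Λ) (V → SymZ Λ) :=
  structAlg E fun v w => iotaZ Λ (lab v w)

/-- The additive structure algebra `Z_a(Γ)` of a moment graph. -/
abbrev MomentGraph.Za {V : Type*} (G : MomentGraph Λ V) :
    Subalgebra (SymZ Λ) (V → SymZ Λ) :=
  ZaOf G.E G.label

end StructureAlgebras

noncomputable section Chern

variable {Λ : Type*} [AddCommGroup Λ] [Module.Free ℤ Λ] [Module.Finite ℤ Λ]

/-- A model of the rational symmetric algebra `S^*(Λ) ⊗ ℚ`. -/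
abbrev SymQ (Λ : Type*) [AddCommGroup Λ] [Module.Free ℤ Λ] [Module.Finite ℤ Λ] :=
  MvPolynomial (bIdx Λ) ℚ

/-- The canonical embedding `Λ → S^*(Λ) ⊗ ℚ`. -/
def iotaQ (Λ : Type*) [AddCommGroup Λ] [Module.Free ℤ Λ] [Module.Finite ℤ Λ] :
    Λ →ₗ[ℤ] SymQ Λ :=
  (Finsupp.linearCombination ℤ fun i => (MvPolynomial.X i : SymQ Λ)).comp
    (Module.Free.chooseBasis ℤ Λ).repr.toLinearMap

/-- The augmentation ideal `I_a` of the rational symmetric algebra: the kernel of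
the ring homomorphism sending every `λ ∈ Λ` to `0`. -/
def IaQ (Λ : Type*) [AddCommGroup Λ] [Module.Free ℤ Λ] [Module.Finite ℤ Λ] :
    Ideal (SymQ Λ) :=
  RingHom.ker (MvPolynomial.constantCoeff : SymQ Λ →+* ℚ)

/-- The truncated rational symmetric algebra `S^{≤ i}_ℚ(Λ) = (S^*(Λ)/I_a^{i+1}) ⊗ ℚ`. -/
abbrev STrunc (Λ : Type*) [AddCommGroup Λ] [Module.Free ℤ Λ] [Module.Finite ℤ Λ] (i : ℕ) :=
  SymQ Λ ⧸ (IaQ Λ) ^ (i + 1)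

/-- The quotient map `S^*_ℚ(Λ) → S^{≤ i}_ℚ(Λ)`. -/
def trMk (Λ : Type*) [AddCommGroup Λ] [Module.Free ℤ Λ] [Module.Finite ℤ Λ] (i : ℕ) :
    SymQ Λ →+* STrunc Λ i :=
  Ideal.Quotient.mk _

/-- The truncated exponential `Σ_{j ≤ i} μ^j/j!` in `S^{≤ i}_ℚ(Λ)`. -/
def texp (Λ : Type*) [AddCommGroup Λ] [Module.Free ℤ Λ] [Module.Finite ℤ Λ]
    (i : ℕ) (μ : Λ) : STrunc Λ i :=
  ∑ j ∈ Finset.range (i + 1), (j.factorial : ℚ)⁻¹ • (trMk Λ i (iotaQ Λ μ)) ^ j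

/-- The truncated rational additive structure algebra of edge data `(E, lab)`. -/
abbrev ZatOf {V : Type*} (i : ℕ) (E : V → V → Prop) (lab : V → V → Λ) :
    Subalgebra (STrunc Λ i) (V → STrunc Λ i) :=
  structAlg E fun v w => trMk Λ i (iotaQ Λ (lab v w))

/-- The truncated rational additive structure algebra `Z_a^{≤ i}(Γ)_ℚ`. -/
abbrev MomentGraph.Zat {V : Type*} (G : MomentGraph Λ V) (i : ℕ) :
    Subalgebra (STrunc Λ i) (V → STrunc Λ i) :=
  ZatOf i G.E G.label

end Chern

noncomputable section Statements
open MomentGraph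
variable {Λ : Type*} [AddCommGroup Λ] [Module.Free ℤ Λ] [Module.Finite ℤ Λ]
variable {V V' : Type*}

section AuxLemmas

lemma mem_structAlg' {V₀ A : Type*} [CommRing A] (E : V₀ → V₀ → Prop) (lab : V₀ → V₀ → A)
    (z : V₀ → A) :
    z ∈ structAlg E lab ↔ ∀ ⦃v w⦄, E v w → ∃ t, z v - z w = lab v w * t := Iff.rfl

lemma grExp_add (μ ν : Λ) : grExp (μ + ν) = grExp μ * grExp ν := by
  simp [grExp, AddMonoidAlgebra.single_mul_single]

lemma grExp_zero : grExp (0 : Λ) = 1 := rfl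

lemma dvd_zsmul' {R : Type*} [CommRing R] {d x : R} (c : ℤ) (h : d ∣ x) : d ∣ c • x := by
  rw [zsmul_eq_mul]; exact h.mul_left _

lemma dvd_qsmul' {A : Type*} [CommRing A] [Algebra ℚ A] {d x : A} (q : ℚ) (h : d ∣ x) :
    d ∣ q • x := by
  obtain ⟨c, hc⟩ := h
  exact ⟨q • c, by rw [hc, mul_smul_comm]⟩

lemma grX_dvd_nat (l : Λ) (m : ℕ) : grX l ∣ grExp (m • l) - 1 := by
  have h1 : grX l ∣ grExp l - 1 := by
    refine ⟨grExp l, ?_⟩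
    rw [grX, sub_mul, one_mul, ← grExp_add, neg_add_cancel, grExp_zero]
  have h2 : grExp (m • l) = grExp l ^ m := by
    induction m with
    | zero => simp [grExp_zero]
    | succ n ih => rw [succ_nsmul, grExp_add, ih, pow_succ]
  rw [h2]
  exact h1.trans (by simpa using sub_dvd_pow_sub_pow (grExp l) 1 m)

lemma grX_dvd_int (l : Λ) (n : ℤ) : grX l ∣ grExp (n • l) - 1 := by
  obtain ⟨m, rfl | rfl⟩ := n.eq_nat_or_neg
  · rw [natCast_zsmul]; exact grX_dvd_nat l m
  · have h := grX_dvd_nat l m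
    have hxy : (-(m : ℤ)) • l + (m : ℕ) • l = 0 := by
      rw [← natCast_zsmul, ← add_smul]; simp
    have key : grExp ((-(m : ℤ)) • l) - 1 =
        -(grExp ((-(m : ℤ)) • l) * (grExp ((m : ℕ) • l) - 1)) := by
      rw [mul_sub, mul_one, ← grExp_add, hxy, grExp_zero, neg_sub]
    rw [key]
    exact dvd_neg.mpr (h.mul_left _)

lemma grX_dvd_grX_smul (l : Λ) (n : ℤ) : grX l ∣ grX (n • l) := by
  have h := grX_dvd_int l (-n)
  have key : grX (n • l) = -(grExp ((-n) • l) - 1) := by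
    rw [grX, neg_smul, neg_sub]
  rw [key]
  exact dvd_neg.mpr h

/-- Monodromy-type condition implies `grX l` divides `g_v(a) - g_w(a)` for all `a`. -/
lemma gxi_sub (l : Λ) (ξv ξw : Λ ≃ₗ[ℤ] Λ) (gv gw : GrpRing Λ →+* GrpRing Λ)
    (hgv : ∀ μ, gv (grExp μ) = grExp (ξv μ)) (hgw : ∀ μ, gw (grExp μ) = grExp (ξw μ))
    (h : ∀ μ : Λ, ∃ n : ℤ, ξv μ - ξw μ = n • l) (a : GrpRing Λ) :
    grX l ∣ gv a - gw a := by
  induction a using AddMonoidAlgebra.induction_on with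
  | of μ =>
    have hof : (AddMonoidAlgebra.of ℤ Λ) (Multiplicative.ofAdd μ) = grExp μ := rfl
    rw [hof, hgv, hgw]
    obtain ⟨n, hn⟩ := h μ
    have hv : ξv μ = ξw μ + n • l := by rw [← hn]; abel
    have key : grExp (ξv μ) - grExp (ξw μ) = grExp (ξw μ) * (grExp (n • l) - 1) := by
      rw [hv, grExp_add]; ring
    rw [key]
    exact (grX_dvd_int l n).mul_left _
  | add a b ha hb =>
    have := dvd_add ha hb
    rw [map_add, map_add]
    convert this using 1; ring
  | smul r a ha =>
    rw [map_zsmul, map_zsmul, ← smul_sub]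
    exact dvd_zsmul' r ha

variable (i : ℕ)

lemma trdvd_texp_sub (l ν : Λ) :
    (trMk Λ i (iotaQ Λ l)) ∣ texp Λ i ν - texp Λ i (ν - l) := by
  rw [texp, texp, ← Finset.sum_sub_distrib]
  refine Finset.dvd_sum fun j _ => ?_
  rw [← smul_sub]
  refine dvd_qsmul' (A := STrunc Λ i) _ ?_
  have h : trMk Λ i (iotaQ Λ ν) - trMk Λ i (iotaQ Λ (ν - l)) = trMk Λ i (iotaQ Λ l) := by
    rw [← map_sub, ← map_sub, show ν - (ν - l) = l by abel]
  exact h ▸ sub_dvd_pow_sub_pow _ _ j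

lemma trdvd_ch_grX_mul (ch : GrpRing Λ →ₗ[ℤ] STrunc Λ i)
    (hch : ∀ μ : Λ, ch (grExp μ) = texp Λ i μ) (l : Λ) (t : GrpRing Λ) :
    (trMk Λ i (iotaQ Λ l)) ∣ ch (grX l * t) := by
  induction t using AddMonoidAlgebra.induction_on with
  | of ν =>
    have hof : (AddMonoidAlgebra.of ℤ Λ) (Multiplicative.ofAdd ν) = grExp ν := rfl
    have hmul : grX l * grExp ν = grExp ν - grExp (ν - l) := by
      rw [grX, sub_mul, one_mul, ← grExp_add, show -l + ν = ν - l by abel]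
    rw [hof, hmul, map_sub, hch, hch]
    exact trdvd_texp_sub i l ν
  | add a b ha hb =>
    rw [mul_add, map_add]
    exact dvd_add ha hb
  | smul r a ha =>
    rw [mul_smul_comm, map_zsmul]
    exact dvd_zsmul' r ha

lemma ch_mem_Zat {V₀ : Type*} (ch : GrpRing Λ →ₗ[ℤ] STrunc Λ i)
    (hch : ∀ μ : Λ, ch (grExp μ) = texp Λ i μ) (E₀ : V₀ → V₀ → Prop) (lab : V₀ → V₀ → Λ)
    (z : V₀ → GrpRing Λ) (hz : z ∈ ZmOf E₀ lab) :
    (fun v => ch (z v)) ∈ ZatOf i E₀ lab := by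
  rw [mem_structAlg'] at hz ⊢
  intro v w hE
  obtain ⟨t, ht⟩ := hz hE
  have h1 : ch (z v) - ch (z w) = ch (grX (lab v w) * t) := by rw [← map_sub, ht]
  obtain ⟨s, hs⟩ := trdvd_ch_grX_mul i ch hch (lab v w) t
  exact ⟨s, by rw [h1, hs]⟩

lemma txi_texp (ξv : Λ ≃ₗ[ℤ] Λ) (t : STrunc Λ i →+* STrunc Λ i)
    (ht : ∀ μ, t (trMk Λ i (iotaQ Λ μ)) = trMk Λ i (iotaQ Λ (ξv μ))) (μ : Λ) :
    t (texp Λ i μ) = texp Λ i (ξv μ) := by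
  rw [texp, texp, map_sum]
  refine Finset.sum_congr rfl fun j _ => ?_
  have hsm := map_rat_smul t.toAddMonoidHom ((j.factorial : ℚ)⁻¹)
    (trMk Λ i (iotaQ Λ μ) ^ j)
  simp only [RingHom.toAddMonoidHom_eq_coe, AddMonoidHom.coe_coe] at hsm
  rw [hsm, map_pow, ht]

lemma ch_comm (ch : GrpRing Λ →ₗ[ℤ] STrunc Λ i)
    (hch : ∀ μ : Λ, ch (grExp μ) = texp Λ i μ) (ξv : Λ ≃ₗ[ℤ] Λ)
    (g : GrpRing Λ →+* GrpRing Λ) (hg : ∀ μ, g (grExp μ) = grExp (ξv μ))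
    (t : STrunc Λ i →+* STrunc Λ i)
    (ht : ∀ μ, t (trMk Λ i (iotaQ Λ μ)) = trMk Λ i (iotaQ Λ (ξv μ))) (a : GrpRing Λ) :
    ch (g a) = t (ch a) := by
  induction a using AddMonoidAlgebra.induction_on with
  | of μ =>
    have hof : (AddMonoidAlgebra.of ℤ Λ) (Multiplicative.ofAdd μ) = grExp μ := rfl
    rw [hof, hg, hch, hch, txi_texp i ξv t ht]
  | add a b ha hb => simp only [map_add, ha, hb]
  | smul r a ha => simp only [map_zsmul, ha]

end AuxLemmas

theorem stmt15 (G : MomentGraph Λ V) (G' : MomentGraph Λ V') (f : G.Hom G')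
    (ξ : V → (Λ ≃ₗ[ℤ] Λ)) (hmon : G.Monodromy ξ)
    (htw : ∀ v w, G.Adj v w → f.toFun v ≠ f.toFun w →
      ∃ n : ℤ, ξ v (G'.albl (f.toFun v) (f.toFun w)) = n • G.albl v w)
    (i : ℕ) (ch : GrpRing Λ →ₗ[ℤ] STrunc Λ i)
    (hch : ∀ μ : Λ, ch (grExp μ) = texp Λ i μ)
    (gξ : V → (GrpRing Λ →+* GrpRing Λ))
    (hgξ : ∀ v (μ : Λ), gξ v (grExp μ) = grExp (ξ v μ))
    (tξ : V → (STrunc Λ i →+* STrunc Λ i))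
    (htξ : ∀ v (μ : Λ), tξ v (trMk Λ i (iotaQ Λ μ)) = trMk Λ i (iotaQ Λ (ξ v μ))) :
    ∀ z' : G'.Zm,
      ((fun v => gξ v ((z' : V' → GrpRing Λ) (f.toFun v))) ∈ G.Zm) ∧
      ((fun v' => ch ((z' : V' → GrpRing Λ) v')) ∈ G'.Zat i) ∧
      ((fun v => tξ v (ch ((z' : V' → GrpRing Λ) (f.toFun v)))) ∈ G.Zat i) ∧
      (∀ v : V, ch (gξ v ((z' : V' → GrpRing Λ) (f.toFun v))) =
        tξ v (ch ((z' : V' → GrpRing Λ) (f.toFun v)))) := by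
  intro z'
  have hz' : ∀ ⦃a b⦄, G'.E a b → ∃ t, (z' : V' → GrpRing Λ) a - (z' : V' → GrpRing Λ) b
      = grX (G'.label a b) * t := (mem_structAlg' _ _ _).mp z'.2
  have part1 : (fun v => gξ v ((z' : V' → GrpRing Λ) (f.toFun v))) ∈ G.Zm := by
    rw [mem_structAlg']
    intro v w hE
    by_cases hf : f.toFun v = f.toFun w
    · rw [← hf]
      exact gxi_sub (G.label v w) (ξ v) (ξ w) (gξ v) (gξ w) (hgξ v) (hgξ w)
        (fun μ => hmon hE μ) ((z' : V' → GrpRing Λ) (f.toFun v))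
    · have hadj : G'.Adj (f.toFun v) (f.toFun w) := (f.adj (Or.inl hE)).resolve_right hf
      have hdvd1 : grX (G'.albl (f.toFun v) (f.toFun w)) ∣
          (z' : V' → GrpRing Λ) (f.toFun v) - (z' : V' → GrpRing Λ) (f.toFun w) := by
        rcases hadj with h1 | h1
        · rw [MomentGraph.albl, if_pos h1]
          obtain ⟨t, ht⟩ := hz' h1
          exact ⟨t, ht⟩
        · have hne : ¬ G'.E (f.toFun v) (f.toFun w) := fun h2 =>
            hf (G'.le_antisymm _ _ (G'.le_of_E h2) (G'.le_of_E h1))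
          rw [MomentGraph.albl, if_neg hne]
          obtain ⟨t, ht⟩ := hz' h1
          refine ⟨-t, ?_⟩
          rw [show (z' : V' → GrpRing Λ) (f.toFun v) - (z' : V' → GrpRing Λ) (f.toFun w)
            = -((z' : V' → GrpRing Λ) (f.toFun w) - (z' : V' → GrpRing Λ) (f.toFun v)) by abel,
            ht]
          ring
      obtain ⟨n, hn⟩ := htw v w (Or.inl hE) hf
      have halbl : G.albl v w = G.label v w := by rw [MomentGraph.albl, if_pos hE]
      have e1 : gξ v (grX (G'.albl (f.toFun v) (f.toFun w))) = grX (n • G.label v w) := by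
        rw [grX, grX, map_sub, map_one, hgξ v, map_neg, hn, halbl]
      have hdvd2 : grX (G.label v w) ∣
          gξ v ((z' : V' → GrpRing Λ) (f.toFun v)) - gξ v ((z' : V' → GrpRing Λ) (f.toFun w)) := by
        rw [← map_sub]
        exact (grX_dvd_grX_smul (G.label v w) n).trans (e1 ▸ (gξ v).map_dvd hdvd1)
      have hdvd3 : grX (G.label v w) ∣
          gξ v ((z' : V' → GrpRing Λ) (f.toFun w)) - gξ w ((z' : V' → GrpRing Λ) (f.toFun w)) :=
        gxi_sub (G.label v w) (ξ v) (ξ w) (gξ v) (gξ w) (hgξ v) (hgξ w)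
          (fun μ => hmon hE μ) ((z' : V' → GrpRing Λ) (f.toFun w))
      obtain ⟨t, ht⟩ := dvd_add hdvd2 hdvd3
      refine ⟨t, ?_⟩
      rw [← ht]
      ring
  have part4 : ∀ v : V, ch (gξ v ((z' : V' → GrpRing Λ) (f.toFun v))) =
      tξ v (ch ((z' : V' → GrpRing Λ) (f.toFun v))) := fun v =>
    ch_comm i ch hch (ξ v) (gξ v) (hgξ v) (tξ v) (htξ v) _
  have part2 : (fun v' => ch ((z' : V' → GrpRing Λ) v')) ∈ G'.Zat i :=
    ch_mem_Zat i ch hch G'.E G'.label _ z'.2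
  have part3 : (fun v => tξ v (ch ((z' : V' → GrpRing Λ) (f.toFun v)))) ∈ G.Zat i := by
    have h := ch_mem_Zat i ch hch G.E G.label _ part1
    have hfun : (fun v => tξ v (ch ((z' : V' → GrpRing Λ) (f.toFun v)))) =
        fun v => ch (gξ v ((z' : V' → GrpRing Λ) (f.toFun v))) :=
      funext fun v => (part4 v).symm
    rw [hfun]
    exact h
  exact ⟨part1, part2, part3, part4⟩

end Statements
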